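/- arXiv:1410.1179 — 2 statements merged into one kernel-verified Lean document; each statement's English description precedes it below -/
import Mathlib

section
/- There exists a constant C > 0 such that for all 0 < γ < 1/3, all ω ∈ [−N−1/2, N+1/2]², and j = 1, 2, one has: (i) |K̂_γ(ω)| ≤ 1; (ii) |∂_j K̂_γ(ω)| ≤ C γ min(|γω|, 1); (iii) |∂_j² K̂_γ(ω)| ≤ C γ², where ∂_j denotes the partial derivative with respect to the j-th coordinate of ω and |·| denotes the Euclidean norm. -/
open MeasureTheory

/-- The Euclidean norm on `ℝ²` (represented as `ℝ × ℝ`). -/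
noncomputable def enorm2 (x : ℝ × ℝ) : ℝ := Real.sqrt (x.1 ^ 2 + x.2 ^ 2)

/-- The microscopic system size `N = ⌊γ⁻²⌋`. -/
noncomputable def NN (γ : ℝ) : ℕ := ⌊γ⁻¹ ^ 2⌋₊

/-- The punctured lattice box `{-N, …, N}² \ {0}`. -/
noncomputable def latt (γ : ℝ) : Finset (ℤ × ℤ) :=
  ((Finset.Icc (-(NN γ : ℤ)) ((NN γ : ℤ))) ×ˢ (Finset.Icc (-(NN γ : ℤ)) ((NN γ : ℤ)))).erase
    (0, 0)

/-- The full lattice box `{-N, …, N}²`. -/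
noncomputable def fullbox (γ : ℝ) : Finset (ℤ × ℤ) :=
  (Finset.Icc (-(NN γ : ℤ)) ((NN γ : ℤ))) ×ˢ (Finset.Icc (-(NN γ : ℤ)) ((NN γ : ℤ)))

/-- The macroscopic lattice spacing `ε = 2 / (2N + 1)`. -/
noncomputable def epsg (γ : ℝ) : ℝ := 2 / (2 * (NN γ : ℝ) + 1)

/-- The normalising constant `c_γ`, with `c_γ⁻¹ = ∑_{k ∈ {-N,…,N}², k ≠ 0} γ² 𝔎(γ k)`. -/
noncomputable def cgam (K : ℝ × ℝ → ℝ) (γ : ℝ) : ℝ :=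
  (∑ k ∈ latt γ, γ ^ 2 * K (γ * (k.1 : ℝ), γ * (k.2 : ℝ)))⁻¹

/-- The discrete Fourier transform `K̂_γ` of the rescaled interaction kernel:
`K̂_γ(ω) = c_γ ∑_{k ∈ {-N,…,N}², k ≠ 0} γ² 𝔎(γ k) cos (π ε ω · k)`. -/
noncomputable def Khat (K : ℝ × ℝ → ℝ) (γ : ℝ) (ω : ℝ × ℝ) : ℝ :=
  cgam K γ * ∑ k ∈ latt γ, γ ^ 2 * K (γ * (k.1 : ℝ), γ * (k.2 : ℝ)) *
    Real.cos (Real.pi * epsg γ * (ω.1 * (k.1 : ℝ) + ω.2 * (k.2 : ℝ)))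

/-- The standing assumptions on the interaction kernel `𝔎 : ℝ² → [0, 1]`:
twice continuously differentiable, rotation invariant, compact support in `B(0,3)`,
`∫ 𝔎 = 1` and `∫ 𝔎(x) |x|² dx = 4`. -/
def IsKernel (K : ℝ × ℝ → ℝ) : Prop :=
  ContDiff ℝ 2 K ∧
  (∀ x, K x ∈ Set.Icc (0 : ℝ) 1) ∧
  (∀ x y : ℝ × ℝ, enorm2 x = enorm2 y → K x = K y) ∧
  (∀ x : ℝ × ℝ, 3 ≤ enorm2 x → K x = 0) ∧
  (∫ x : ℝ × ℝ, K x) = 1 ∧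
  (∫ x : ℝ × ℝ, K x * enorm2 x ^ 2) = 4

/-- The unit vector in direction `j` in `ℝ²`. -/
noncomputable def dirv (j : Fin 2) : ℝ × ℝ := if j = 0 then (1, 0) else (0, 1)

/-- The `j`-th coordinate of a point of `ℝ²`. -/
noncomputable def coordj (j : Fin 2) (ω : ℝ × ℝ) : ℝ := if j = 0 then ω.1 else ω.2

/-- The partial derivative `∂_j f` of a function on `ℝ²`. -/
noncomputable def pd (f : ℝ × ℝ → ℝ) (j : Fin 2) (ω : ℝ × ℝ) : ℝ := fderiv ℝ f ω (dirv j)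

/-- The second partial derivative `∂_j² f` of a function on `ℝ²`. -/
noncomputable def pd2 (f : ℝ × ℝ → ℝ) (j : Fin 2) (ω : ℝ × ℝ) : ℝ := pd (pd f j) j ω

/-- The linear form `v ↦ v·k` on `ℝ²`. -/
noncomputable def Lkmap (k : ℤ × ℤ) : (ℝ × ℝ) →L[ℝ] ℝ :=
  (k.1 : ℝ) • ContinuousLinearMap.fst ℝ ℝ ℝ + (k.2 : ℝ) • ContinuousLinearMap.snd ℝ ℝ ℝ

lemma Lkmap_apply (k : ℤ × ℤ) (v : ℝ × ℝ) : Lkmap k v = v.1 * (k.1 : ℝ) + v.2 * (k.2 : ℝ) := by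
  simp [Lkmap]; ring

/-- Partial derivative of a finite trigonometric-type sum. -/
lemma pd_key (c b : ℝ) (s : Finset (ℤ × ℤ)) (a : ℤ × ℤ → ℝ)
    (g g' : ℝ → ℝ) (hg : ∀ x, HasDerivAt g (g' x) x) (j : Fin 2) (ω : ℝ × ℝ) :
    pd (fun ω : ℝ × ℝ => c * ∑ k ∈ s, a k * g (b * (ω.1 * (k.1 : ℝ) + ω.2 * (k.2 : ℝ)))) j ω
      = c * ∑ k ∈ s, a k * (g' (b * (ω.1 * (k.1 : ℝ) + ω.2 * (k.2 : ℝ))) *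
          (b * (if j = 0 then (k.1 : ℝ) else (k.2 : ℝ)))) := by
  have hterm : ∀ k : ℤ × ℤ, HasFDerivAt
      (fun ω : ℝ × ℝ => a k * g (b * (ω.1 * (k.1 : ℝ) + ω.2 * (k.2 : ℝ))))
      ((a k * (g' (b * (ω.1 * (k.1 : ℝ) + ω.2 * (k.2 : ℝ))) * b)) • Lkmap k) ω := by
    intro k
    have he : (fun ω : ℝ × ℝ => ω.1 * (k.1 : ℝ) + ω.2 * (k.2 : ℝ)) = Lkmap k := by
      funext v; rw [Lkmap_apply]
    have hL : HasFDerivAt (fun ω : ℝ × ℝ => ω.1 * (k.1 : ℝ) + ω.2 * (k.2 : ℝ)) (Lkmap k) ω := by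
      rw [he]; exact (Lkmap k).hasFDerivAt
    have h1 := hL.const_mul b
    have h2 := (hg (b * (ω.1 * (k.1 : ℝ) + ω.2 * (k.2 : ℝ)))).comp_hasFDerivAt ω h1
    have h3 := h2.const_mul (a k)
    have e : (a k * (g' (b * (ω.1 * (k.1 : ℝ) + ω.2 * (k.2 : ℝ))) * b)) • Lkmap k
        = a k • g' (b * (ω.1 * (k.1 : ℝ) + ω.2 * (k.2 : ℝ))) • b • Lkmap k := by
      rw [smul_smul, smul_smul, mul_assoc]
    rw [e]
    exact h3
  have hsum := HasFDerivAt.fun_sum (fun k (_ : k ∈ s) => hterm k)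
  have hfull := hsum.const_mul c
  have hpd : pd (fun ω : ℝ × ℝ =>
      c * ∑ k ∈ s, a k * g (b * (ω.1 * (k.1 : ℝ) + ω.2 * (k.2 : ℝ)))) j ω
      = (c • ∑ k ∈ s, (a k * (g' (b * (ω.1 * (k.1 : ℝ) + ω.2 * (k.2 : ℝ))) * b)) • Lkmap k)
        (dirv j) := by
    unfold pd
    rw [hfull.fderiv]
  rw [hpd]
  simp only [ContinuousLinearMap.smul_apply, ContinuousLinearMap.sum_apply, Lkmap_apply,
    smul_eq_mul]
  fin_cases j <;>
    · simp only [dirv]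
      norm_num
      congr 1
      exact Or.inl (Finset.sum_congr rfl fun k _ => by ring)

/-- Master bound for the normalized sums appearing in `Khat`. -/
lemma master_bound {ι : Type*} (c M : ℝ) (s : Finset ι) (a t : ι → ℝ)
    (hc : 0 ≤ c) (hM : 0 ≤ M) (hcS : c * ∑ k ∈ s, a k ≤ 1)
    (ha : ∀ k ∈ s, 0 ≤ a k) (ht : ∀ k ∈ s, |a k * t k| ≤ a k * M) :
    |c * ∑ k ∈ s, a k * t k| ≤ M := by
  have h1 : |∑ k ∈ s, a k * t k| ≤ ∑ k ∈ s, a k * M :=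
    (Finset.abs_sum_le_sum_abs _ _).trans (Finset.sum_le_sum ht)
  have h2 : |c * ∑ k ∈ s, a k * t k| ≤ c * ∑ k ∈ s, a k * M := by
    rw [abs_mul, abs_of_nonneg hc]
    exact mul_le_mul_of_nonneg_left h1 hc
  refine h2.trans ?_
  rw [← Finset.sum_mul, ← mul_assoc]
  calc c * (∑ k ∈ s, a k) * M ≤ 1 * M := mul_le_mul_of_nonneg_right hcS hM
    _ = M := one_mul M

set_option maxHeartbeats 3200000 in
/-- There is a constant `C > 0` such that for all `0 < γ < 1/3`, all
`ω ∈ [-N-1/2, N+1/2]²` and `j = 1, 2`: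
(i) `|K̂_γ(ω)| ≤ 1`; (ii) `|∂_j K̂_γ(ω)| ≤ C γ min (γ|ω|) 1`; (iii) `|∂_j² K̂_γ(ω)| ≤ C γ²`. -/
theorem stmt8 (K : ℝ × ℝ → ℝ) (hK : IsKernel K) :
    ∃ C : ℝ, 0 < C ∧ ∀ γ : ℝ, 0 < γ → γ < 1 / 3 → ∀ ω : ℝ × ℝ,
      |ω.1| ≤ (NN γ : ℝ) + 1 / 2 → |ω.2| ≤ (NN γ : ℝ) + 1 / 2 → ∀ j : Fin 2,
      |Khat K γ ω| ≤ 1 ∧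
      |pd (Khat K γ) j ω| ≤ C * γ * min (γ * enorm2 ω) 1 ∧
      |pd2 (Khat K γ) j ω| ≤ C * γ ^ 2 := by
  classical
  obtain ⟨-, hrange, -, hsupp, -, -⟩ := hK
  refine ⟨600, by norm_num, ?_⟩
  intro γ hγ hγ3 ω hω1 hω2 j
  have hγ1 : γ ≤ 1 := le_trans hγ3.le (by norm_num)
  set b : ℝ := Real.pi * epsg γ with hbdef
  set a : ℤ × ℤ → ℝ := fun k => γ ^ 2 * K (γ * (k.1 : ℝ), γ * (k.2 : ℝ)) with hadef
  set dj : ℤ × ℤ → ℝ := fun k => if j = 0 then (k.1 : ℝ) else (k.2 : ℝ) with hdjdef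
  have ha : ∀ k, 0 ≤ a k := fun k => mul_nonneg (sq_nonneg γ) (hrange _).1
  have hS0 : (0 : ℝ) ≤ ∑ k ∈ latt γ, a k := Finset.sum_nonneg fun k _ => ha k
  have hc0 : 0 ≤ cgam K γ := inv_nonneg.mpr hS0
  have hcS : cgam K γ * ∑ k ∈ latt γ, a k ≤ 1 := by
    rcases hS0.eq_or_lt with h | h
    · rw [← h, mul_zero]; norm_num
    · have : cgam K γ = (∑ k ∈ latt γ, a k)⁻¹ := rfl
      rw [this, inv_mul_cancel₀ h.ne']
  -- bounds on b = π ε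
  have heps0 : 0 < epsg γ := by
    unfold epsg
    positivity
  have hb0 : 0 < b := mul_pos Real.pi_pos heps0
  have hγ2 : γ ^ 2 ≤ 1 := by nlinarith
  have heps : epsg γ ≤ 2 * γ ^ 2 := by
    have h1 : (γ⁻¹ ^ 2 : ℝ) < (NN γ : ℝ) + 1 := by
      have := Nat.lt_floor_add_one (γ⁻¹ ^ 2)
      unfold NN
      push_cast
      exact_mod_cast this
    have h4 : γ ^ 2 * γ⁻¹ ^ 2 = 1 := by field_simp
    have h3 : γ ^ 2 * (γ⁻¹ ^ 2) < γ ^ 2 * ((NN γ : ℝ) + 1) :=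
      mul_lt_mul_of_pos_left h1 (pow_pos hγ 2)
    have hn0 : (0 : ℝ) ≤ (NN γ : ℝ) := Nat.cast_nonneg _
    rw [epsg, div_le_iff₀ (by positivity)]
    nlinarith
  have hbb : b ≤ 8 * γ ^ 2 := by
    have hpi : Real.pi ≤ 4 := Real.pi_le_four
    have := Real.pi_pos
    rw [hbdef]
    nlinarith
  -- support facts
  have enonneg : ∀ v : ℝ × ℝ, 0 ≤ enorm2 v := fun v => Real.sqrt_nonneg _
  have hsup : ∀ k : ℤ × ℤ, a k ≠ 0 →
      γ * |(k.1 : ℝ)| ≤ 3 ∧ γ * |(k.2 : ℝ)| ≤ 3 ∧ γ * enorm2 ((k.1 : ℝ), (k.2 : ℝ)) ≤ 3 := by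
    intro k hk
    have hK0 : K (γ * (k.1 : ℝ), γ * (k.2 : ℝ)) ≠ 0 := by
      intro h
      apply hk
      rw [hadef]
      simp [h]
    have h3 : enorm2 (γ * (k.1 : ℝ), γ * (k.2 : ℝ)) < 3 := by
      by_contra h
      push_neg at h
      exact hK0 (hsupp _ h)
    have heq : enorm2 (γ * (k.1 : ℝ), γ * (k.2 : ℝ)) = γ * enorm2 ((k.1 : ℝ), (k.2 : ℝ)) := by
      unfold enorm2
      rw [show (γ * (k.1 : ℝ)) ^ 2 + (γ * (k.2 : ℝ)) ^ 2
          = γ ^ 2 * ((k.1 : ℝ) ^ 2 + (k.2 : ℝ) ^ 2) by ring,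
        Real.sqrt_mul (sq_nonneg γ), Real.sqrt_sq hγ.le]
    have hek : γ * enorm2 ((k.1 : ℝ), (k.2 : ℝ)) ≤ 3 := by rw [← heq]; exact h3.le
    have h1 : |(k.1 : ℝ)| ≤ enorm2 ((k.1 : ℝ), (k.2 : ℝ)) := by
      unfold enorm2
      rw [← Real.sqrt_sq_eq_abs]
      exact Real.sqrt_le_sqrt (by nlinarith [sq_nonneg ((k.2 : ℝ))])
    have h2 : |(k.2 : ℝ)| ≤ enorm2 ((k.1 : ℝ), (k.2 : ℝ)) := by
      unfold enorm2
      rw [← Real.sqrt_sq_eq_abs]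
      exact Real.sqrt_le_sqrt (by nlinarith [sq_nonneg ((k.1 : ℝ))])
    exact ⟨le_trans (mul_le_mul_of_nonneg_left h1 hγ.le) hek,
      le_trans (mul_le_mul_of_nonneg_left h2 hγ.le) hek, hek⟩
  have hdjb : ∀ k : ℤ × ℤ, a k ≠ 0 → γ * |dj k| ≤ 3 := by
    intro k hk
    obtain ⟨h1, h2, -⟩ := hsup k hk
    rw [hdjdef]
    dsimp only
    split_ifs
    · exact h1
    · exact h2
  -- Cauchy–Schwarz
  have hCS : ∀ k : ℤ × ℤ, |ω.1 * (k.1 : ℝ) + ω.2 * (k.2 : ℝ)|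
      ≤ enorm2 ω * enorm2 ((k.1 : ℝ), (k.2 : ℝ)) := by
    intro k
    have h1 : (ω.1 * (k.1 : ℝ) + ω.2 * (k.2 : ℝ)) ^ 2
        ≤ (ω.1 ^ 2 + ω.2 ^ 2) * ((k.1 : ℝ) ^ 2 + (k.2 : ℝ) ^ 2) := by
      nlinarith [sq_nonneg (ω.1 * (k.2 : ℝ) - ω.2 * (k.1 : ℝ))]
    calc |ω.1 * (k.1 : ℝ) + ω.2 * (k.2 : ℝ)|
        = Real.sqrt ((ω.1 * (k.1 : ℝ) + ω.2 * (k.2 : ℝ)) ^ 2) := (Real.sqrt_sq_eq_abs _).symm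
      _ ≤ Real.sqrt ((ω.1 ^ 2 + ω.2 ^ 2) * ((k.1 : ℝ) ^ 2 + (k.2 : ℝ) ^ 2)) :=
          Real.sqrt_le_sqrt h1
      _ = enorm2 ω * enorm2 ((k.1 : ℝ), (k.2 : ℝ)) := by
          unfold enorm2
          rw [Real.sqrt_mul (by positivity)]
  -- θ bound
  have hθ : ∀ k : ℤ × ℤ, a k ≠ 0 →
      |b * (ω.1 * (k.1 : ℝ) + ω.2 * (k.2 : ℝ))| ≤ 24 * (γ * enorm2 ω) := by
    intro k hk
    obtain ⟨-, -, h3⟩ := hsup k hk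
    rw [abs_mul, abs_of_pos hb0]
    have hcs := hCS k
    have hE := enonneg ω
    have hF := enonneg ((k.1 : ℝ), (k.2 : ℝ))
    have step : b * |ω.1 * (k.1 : ℝ) + ω.2 * (k.2 : ℝ)|
        ≤ b * (enorm2 ω * enorm2 ((k.1 : ℝ), (k.2 : ℝ))) :=
      mul_le_mul_of_nonneg_left hcs hb0.le
    refine step.trans ?_
    nlinarith [mul_nonneg hE hF, mul_nonneg (mul_nonneg hγ.le hE) (sub_nonneg.mpr h3),
      mul_nonneg (mul_nonneg hE hF) (sub_nonneg.mpr hbb)]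
  have hbdj : ∀ k : ℤ × ℤ, a k ≠ 0 → b * |dj k| ≤ 24 * γ := by
    intro k hk
    have h1 := hdjb k hk
    have h2 := abs_nonneg (dj k)
    nlinarith [mul_nonneg h2 (sub_nonneg.mpr hbb), mul_nonneg hγ.le (sub_nonneg.mpr h1)]
  have hmin0 : 0 ≤ min (γ * enorm2 ω) 1 :=
    le_min (mul_nonneg hγ.le (enonneg ω)) one_pos.le
  have hKfun : Khat K γ = fun ω' : ℝ × ℝ => cgam K γ * ∑ k ∈ latt γ,
      a k * Real.cos (b * (ω'.1 * (k.1 : ℝ) + ω'.2 * (k.2 : ℝ))) := by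
    funext ω'
    simp only [Khat, hadef, hbdef]
  refine ⟨?_, ?_, ?_⟩
  -- (i)
  · refine master_bound (cgam K γ) 1 (latt γ) a
      (fun k => Real.cos (b * (ω.1 * (k.1 : ℝ) + ω.2 * (k.2 : ℝ))))
      hc0 one_pos.le hcS (fun k _ => ha k) ?_
    intro k _
    beta_reduce
    rw [abs_mul, abs_of_nonneg (ha k)]
    exact mul_le_mul_of_nonneg_left (Real.abs_cos_le_one _) (ha k)
  -- (ii)
  · rw [hKfun, pd_key (cgam K γ) b (latt γ) a Real.cos (fun x => -Real.sin x)
      (fun x => Real.hasDerivAt_cos x) j ω]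
    refine master_bound (cgam K γ) (600 * γ * min (γ * enorm2 ω) 1) (latt γ) a
      (fun k => (-Real.sin (b * (ω.1 * (k.1 : ℝ) + ω.2 * (k.2 : ℝ)))) * (b * dj k))
      hc0 (by positivity) hcS (fun k _ => ha k) ?_
    intro k _
    beta_reduce
    by_cases hak : a k = 0
    · rw [hak]; simp
    rw [abs_mul, abs_of_nonneg (ha k)]
    refine mul_le_mul_of_nonneg_left ?_ (ha k)
    have habs : |(-Real.sin (b * (ω.1 * (k.1 : ℝ) + ω.2 * (k.2 : ℝ)))) * (b * dj k)|
        = |Real.sin (b * (ω.1 * (k.1 : ℝ) + ω.2 * (k.2 : ℝ)))| * (b * |dj k|) := by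
      rw [abs_mul, abs_neg, abs_mul, abs_of_pos hb0]
    rw [habs]
    have hs1 : |Real.sin (b * (ω.1 * (k.1 : ℝ) + ω.2 * (k.2 : ℝ)))| ≤ 1 :=
      Real.abs_sin_le_one _
    have hs2 : |Real.sin (b * (ω.1 * (k.1 : ℝ) + ω.2 * (k.2 : ℝ)))|
        ≤ 24 * (γ * enorm2 ω) := Real.abs_sin_le_abs.trans (hθ k hak)
    have hbd := hbdj k hak
    have hbd0 : 0 ≤ b * |dj k| := mul_nonneg hb0.le (abs_nonneg _)
    have hs0 := abs_nonneg (Real.sin (b * (ω.1 * (k.1 : ℝ) + ω.2 * (k.2 : ℝ))))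
    have hE := enonneg ω
    rcases le_total (γ * enorm2 ω) 1 with hm | hm
    · rw [min_eq_left hm]
      nlinarith [mul_le_mul hs2 hbd hbd0 (by positivity), mul_nonneg hγ.le hE,
        mul_nonneg (mul_nonneg hγ.le hγ.le) hE]
    · rw [min_eq_right hm]
      nlinarith [mul_le_mul hs1 hbd hbd0 one_pos.le]
  -- (iii)
  · have hfun : pd (Khat K γ) j = fun ω' : ℝ × ℝ => cgam K γ * ∑ k ∈ latt γ,
        (a k * (b * dj k)) *
          (-Real.sin (b * (ω'.1 * (k.1 : ℝ) + ω'.2 * (k.2 : ℝ)))) := by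
      funext ω'
      rw [hKfun, pd_key (cgam K γ) b (latt γ) a Real.cos (fun x => -Real.sin x)
        (fun x => Real.hasDerivAt_cos x) j ω']
      congr 1
      refine Finset.sum_congr rfl fun k _ => ?_
      beta_reduce
      ring
    have hpd2 : pd2 (Khat K γ) j ω = cgam K γ * ∑ k ∈ latt γ,
        (a k * (b * dj k)) * ((-Real.cos (b * (ω.1 * (k.1 : ℝ) + ω.2 * (k.2 : ℝ)))) *
          (b * dj k)) := by
      show pd (pd (Khat K γ) j) j ω = _
      rw [hfun]
      exact pd_key (cgam K γ) b (latt γ) (fun k => a k * (b * dj k))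
        (fun x => -Real.sin x) (fun x => -Real.cos x)
        (fun x => (Real.hasDerivAt_sin x).neg) j ω
    have hre : (∑ k ∈ latt γ, (a k * (b * dj k)) *
          ((-Real.cos (b * (ω.1 * (k.1 : ℝ) + ω.2 * (k.2 : ℝ)))) * (b * dj k)))
        = ∑ k ∈ latt γ, a k * ((b * dj k) *
          ((-Real.cos (b * (ω.1 * (k.1 : ℝ) + ω.2 * (k.2 : ℝ)))) * (b * dj k))) :=
      Finset.sum_congr rfl fun k _ => by ring
    rw [hpd2, hre]
    refine master_bound (cgam K γ) (600 * γ ^ 2) (latt γ) a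
      (fun k => (b * dj k) * ((-Real.cos (b * (ω.1 * (k.1 : ℝ) + ω.2 * (k.2 : ℝ)))) *
        (b * dj k)))
      hc0 (by positivity) hcS (fun k _ => ha k) ?_
    intro k _
    beta_reduce
    by_cases hak : a k = 0
    · rw [hak]; simp
    rw [abs_mul, abs_of_nonneg (ha k)]
    refine mul_le_mul_of_nonneg_left ?_ (ha k)
    have habs : |(b * dj k) * ((-Real.cos (b * (ω.1 * (k.1 : ℝ) + ω.2 * (k.2 : ℝ)))) *
        (b * dj k))| = (b * |dj k|) *
        (|Real.cos (b * (ω.1 * (k.1 : ℝ) + ω.2 * (k.2 : ℝ)))| * (b * |dj k|)) := by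
      simp only [abs_mul, abs_neg, abs_of_pos hb0]
    rw [habs]
    have hbd := hbdj k hak
    have hbd0 : 0 ≤ b * |dj k| := mul_nonneg hb0.le (abs_nonneg _)
    have hcos := Real.abs_cos_le_one (b * (ω.1 * (k.1 : ℝ) + ω.2 * (k.2 : ℝ)))
    have hcos0 := abs_nonneg (Real.cos (b * (ω.1 * (k.1 : ℝ) + ω.2 * (k.2 : ℝ))))
    nlinarith [mul_le_mul hcos hbd hbd0 one_pos.le,
      mul_le_mul hbd (mul_le_mul hcos hbd hbd0 one_pos.le) (mul_nonneg hcos0 hbd0)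
        (by positivity), sq_nonneg γ]
end

section
/- There exist constants C₁ > 0 and γ₀ ∈ (0,1/3) such that for all 0 < γ < γ₀ and all ω ∈ [−N−1/2, N+1/2]², one has 1 − K̂_γ(ω) ≥ min(|γω|², 1)/C₁, where |·| denotes the Euclidean norm. -/
open MeasureTheory

lemma abs_fst_le_enorm2 (x : ℝ × ℝ) : |x.1| ≤ enorm2 x := by
  rw [enorm2, ← Real.sqrt_sq_eq_abs]
  exact Real.sqrt_le_sqrt (by nlinarith [sq_nonneg x.2])

lemma abs_snd_le_enorm2 (x : ℝ × ℝ) : |x.2| ≤ enorm2 x := by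
  rw [enorm2, ← Real.sqrt_sq_eq_abs]
  exact Real.sqrt_le_sqrt (by nlinarith [sq_nonneg x.1])

/-- weights -/
noncomputable def wv (K : ℝ × ℝ → ℝ) (γ : ℝ) (k : ℤ × ℤ) : ℝ :=
  γ ^ 2 * K (γ * (k.1 : ℝ), γ * (k.2 : ℝ))

noncomputable def Sg (K : ℝ × ℝ → ℝ) (γ : ℝ) : ℝ := ∑ k ∈ latt γ, wv K γ k

noncomputable def tv (γ : ℝ) (ω : ℝ × ℝ) (k : ℤ × ℤ) : ℝ :=
  Real.pi * epsg γ * (ω.1 * (k.1 : ℝ) + ω.2 * (k.2 : ℝ))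

noncomputable def Phi (K : ℝ × ℝ → ℝ) (γ : ℝ) (ω : ℝ × ℝ) : ℝ :=
  ∑ k ∈ latt γ, wv K γ k * (1 - Real.cos (tv γ ω k))

lemma mem_latt_iff {γ : ℝ} {k : ℤ × ℤ} :
    k ∈ latt γ ↔ k ≠ (0, 0) ∧ |k.1| ≤ (NN γ : ℤ) ∧ |k.2| ≤ (NN γ : ℤ) := by
  simp [latt, Finset.mem_erase, Finset.mem_product, Finset.mem_Icc, abs_le, and_assoc]

/-- generic counting lemma -/
lemma card_scaled_le {γ c : ℝ} (hγ : 0 < γ) (hc : 0 ≤ c) (F : Finset (ℤ × ℤ))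
    (h : ∀ k ∈ F, |γ * (k.1 : ℝ)| ≤ c ∧ |γ * (k.2 : ℝ)| ≤ c) :
    (F.card : ℝ) * γ ^ 2 ≤ (2 * c + γ) ^ 2 := by
  set m : ℤ := ⌊c / γ⌋ with hm
  have hm0 : 0 ≤ m := Int.floor_nonneg.2 (by positivity)
  have hmr : (m : ℝ) ≤ c / γ := Int.floor_le _
  have hsub : F ⊆ Finset.Icc (-m) m ×ˢ Finset.Icc (-m) m := by
    intro k hk
    obtain ⟨h1, h2⟩ := h k hk
    rw [Finset.mem_product, Finset.mem_Icc, Finset.mem_Icc]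
    have e1 : |(k.1 : ℝ)| ≤ c / γ := by
      rw [le_div_iff₀ hγ]
      calc |(k.1 : ℝ)| * γ = |γ * (k.1:ℝ)| := by
            rw [abs_mul, abs_of_pos hγ]; ring
        _ ≤ c := h1
    have e2 : |(k.2 : ℝ)| ≤ c / γ := by
      rw [le_div_iff₀ hγ]
      calc |(k.2 : ℝ)| * γ = |γ * (k.2:ℝ)| := by
            rw [abs_mul, abs_of_pos hγ]; ring
      _ ≤ c := h2
    have f1 : |k.1| ≤ m := Int.le_floor.2 (by rwa [← Int.cast_abs] at e1)
    have f2 : |k.2| ≤ m := Int.le_floor.2 (by rwa [← Int.cast_abs] at e2)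
    rw [abs_le] at f1 f2
    exact ⟨⟨f1.1, f1.2⟩, ⟨f2.1, f2.2⟩⟩
  have hcard : F.card ≤ ((m + 1 - -m).toNat) ^ 2 := by
    calc F.card ≤ _ := Finset.card_le_card hsub
      _ = (Finset.Icc (-m) m).card * (Finset.Icc (-m) m).card := Finset.card_product _ _
      _ = ((m + 1 - -m).toNat) ^ 2 := by rw [Int.card_Icc]; ring
  have h2m : ((m + 1 - -m).toNat : ℝ) = 2 * (m : ℝ) + 1 := by
    exact_mod_cast (by omega : (((m + 1 - -m).toNat : ℤ)) = 2 * m + 1)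
  have hFr : (F.card : ℝ) ≤ (2 * (m:ℝ) + 1) ^ 2 := by
    calc (F.card : ℝ) ≤ (((m + 1 - -m).toNat : ℝ)) ^ 2 := by
          exact_mod_cast hcard
      _ = (2 * (m:ℝ) + 1) ^ 2 := by rw [h2m]
  have hb : 0 ≤ 2 * (m:ℝ) + 1 := by positivity
  calc (F.card : ℝ) * γ ^ 2 ≤ (2 * (m:ℝ) + 1) ^ 2 * γ ^ 2 := by
        apply mul_le_mul_of_nonneg_right hFr (by positivity)
    _ = ((2 * (m:ℝ) + 1) * γ) ^ 2 := by ring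
    _ ≤ (2 * c + γ) ^ 2 := by
        apply pow_le_pow_left₀ (by positivity)
        calc (2 * (m:ℝ) + 1) * γ ≤ (2 * (c/γ) + 1) * γ := by nlinarith
          _ = 2 * c + γ := by field_simp

section fixedγ

variable {K : ℝ × ℝ → ℝ} {γ : ℝ}

lemma wv_nonneg (hK01 : ∀ x, K x ∈ Set.Icc (0:ℝ) 1) (k : ℤ × ℤ) : 0 ≤ wv K γ k :=
  mul_nonneg (by positivity) (hK01 _).1

lemma sum_wv_le (hγ0 : 0 < γ)
    (hK01 : ∀ x, K x ∈ Set.Icc (0:ℝ) 1)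
    (hsupp : ∀ x : ℝ × ℝ, 3 ≤ enorm2 x → K x = 0)
    {c : ℝ} (hc : 0 ≤ c) (F : Finset (ℤ × ℤ))
    (hF : ∀ k ∈ F, K (γ * (k.1 : ℝ), γ * (k.2 : ℝ)) ≤ c) :
    ∑ k ∈ F, wv K γ k ≤ c * (2 * 3 + γ) ^ 2 := by
  classical
  set p : ℤ × ℤ → Prop := fun k => |γ * (k.1 : ℝ)| ≤ 3 ∧ |γ * (k.2 : ℝ)| ≤ 3 with hp
  have hsplit := Finset.sum_filter_add_sum_filter_not F p (wv K γ)
  have hzero : ∑ k ∈ F.filter (fun k => ¬ p k), wv K γ k = 0 := by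
    apply Finset.sum_eq_zero
    intro k hk
    rw [Finset.mem_filter] at hk
    have : K (γ * (k.1 : ℝ), γ * (k.2 : ℝ)) = 0 := by
      apply hsupp
      rcases not_and_or.1 hk.2 with h | h
      · exact le_trans (le_of_not_ge h) (abs_fst_le_enorm2 (γ * (k.1:ℝ), γ * (k.2:ℝ)))
      · exact le_trans (le_of_not_ge h) (abs_snd_le_enorm2 (γ * (k.1:ℝ), γ * (k.2:ℝ)))
    simp [wv, this]
  have hcard : ((F.filter p).card : ℝ) * γ ^ 2 ≤ (2 * 3 + γ) ^ 2 := by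
    apply card_scaled_le hγ0 (by norm_num)
    intro k hk
    exact (Finset.mem_filter.1 hk).2
  have hmain : ∑ k ∈ F.filter p, wv K γ k ≤ c * (2 * 3 + γ) ^ 2 := by
    calc ∑ k ∈ F.filter p, wv K γ k ≤ ∑ k ∈ F.filter p, c * γ ^ 2 := by
          apply Finset.sum_le_sum
          intro k hk
          have := hF k (Finset.mem_filter.1 hk).1
          have h0 := (hK01 (γ * (k.1 : ℝ), γ * (k.2 : ℝ))).1
          rw [wv]
          nlinarith [sq_nonneg γ]
      _ = ((F.filter p).card : ℝ) * γ ^ 2 * c := by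
          rw [Finset.sum_const]
          simp; ring
      _ ≤ (2 * 3 + γ) ^ 2 * c := by nlinarith
      _ = c * (2 * 3 + γ) ^ 2 := by ring
  calc ∑ k ∈ F, wv K γ k = _ + _ := hsplit.symm
    _ ≤ c * (2 * 3 + γ) ^ 2 := by rw [hzero]; linarith [hmain]

lemma Sg_le_49 (hγ0 : 0 < γ) (hγ3 : γ ≤ 1)
    (hK01 : ∀ x, K x ∈ Set.Icc (0:ℝ) 1)
    (hsupp : ∀ x : ℝ × ℝ, 3 ≤ enorm2 x → K x = 0) :
    Sg K γ ≤ 49 := by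
  have h := sum_wv_le hγ0 hK01 hsupp (by norm_num : (0:ℝ) ≤ 1) (latt γ)
    (fun k _ => (hK01 _).2)
  calc Sg K γ ≤ 1 * (2 * 3 + γ) ^ 2 := h
    _ ≤ 49 := by nlinarith

noncomputable def P0 (K : ℝ × ℝ → ℝ) (γ : ℝ) : Finset (ℤ × ℤ) :=
  @Finset.filter _ (fun k => (1:ℝ)/400 ≤ K (γ * (k.1 : ℝ), γ * (k.2 : ℝ)))
    (Classical.decPred _) (latt γ)

lemma mem_P0_iff {k : ℤ × ℤ} :
    k ∈ P0 K γ ↔ k ∈ latt γ ∧ (1:ℝ)/400 ≤ K (γ * (k.1 : ℝ), γ * (k.2 : ℝ)) := by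
  rw [P0, Finset.mem_filter]

lemma card_P0 (hγ0 : 0 < γ) (hγ1 : γ ≤ 1)
    (hK01 : ∀ x, K x ∈ Set.Icc (0:ℝ) 1)
    (hsupp : ∀ x : ℝ × ℝ, 3 ≤ enorm2 x → K x = 0)
    (hS : 3/4 ≤ Sg K γ) :
    (1/2 : ℝ) ≤ ((P0 K γ).card : ℝ) * γ ^ 2 := by
  classical
  rw [show (P0 K γ).card = ((latt γ).filter
      (fun k => (1:ℝ)/400 ≤ K (γ * (k.1 : ℝ), γ * (k.2 : ℝ)))).card by
    rw [P0]]
  set p : ℤ × ℤ → Prop := fun k => (1:ℝ)/400 ≤ K (γ * (k.1 : ℝ), γ * (k.2 : ℝ)) with hp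
  have hsplit := Finset.sum_filter_add_sum_filter_not (latt γ) p (wv K γ)
  have h1 : ∑ k ∈ (latt γ).filter p, wv K γ k
      ≤ (((latt γ).filter p).card : ℝ) * γ ^ 2 := by
    calc ∑ k ∈ (latt γ).filter p, wv K γ k ≤ ∑ _k ∈ (latt γ).filter p, γ ^ 2 := by
          apply Finset.sum_le_sum
          intro k _
          have := (hK01 (γ * (k.1 : ℝ), γ * (k.2 : ℝ))).2
          rw [wv]
          nlinarith [sq_nonneg γ]
      _ = (((latt γ).filter p).card : ℝ) * γ ^ 2 := by rw [Finset.sum_const]; simp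
  have h2 : ∑ k ∈ (latt γ).filter (fun k => ¬ p k), wv K γ k ≤ (1/400) * (2 * 3 + γ) ^ 2 := by
    apply sum_wv_le hγ0 hK01 hsupp (by norm_num)
    intro k hk
    exact le_of_not_ge (Finset.mem_filter.1 hk).2
  have hq : (1/400 : ℝ) * (2 * 3 + γ) ^ 2 ≤ 49/400 := by nlinarith
  have : (3/4 : ℝ) ≤ (((latt γ).filter p).card : ℝ) * γ ^ 2 + 49/400 := by
    calc (3/4 : ℝ) ≤ Sg K γ := hS
      _ = _ + _ := hsplit.symm
      _ ≤ _ := by linarith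
  linarith

lemma cos_pair (a b : ℝ) : 1 - Real.cos (b - a) ≤ 2 * (1 - Real.cos a) + 2 * (1 - Real.cos b) := by
  rw [Real.cos_sub]
  nlinarith [Real.sin_sq_add_cos_sq a, Real.sin_sq_add_cos_sq b,
    sq_nonneg (Real.sin a - Real.sin b), sq_nonneg (Real.sin a + Real.sin b),
    sq_nonneg (Real.cos a + Real.cos b - 2)]

lemma one_sub_cos_nonneg (t : ℝ) : 0 ≤ 1 - Real.cos t := by
  nlinarith [Real.cos_le_one t]

set_option maxHeartbeats 1000000 in
lemma pair_lemma (hγ0 : 0 < γ) (hγ1 : γ ≤ 1/2) (hγN : 4/γ ≤ (NN γ : ℝ))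
    (hK01 : ∀ x, K x ∈ Set.Icc (0:ℝ) 1)
    (hsupp : ∀ x : ℝ × ℝ, 3 ≤ enorm2 x → K x = 0)
    {L : ℝ} (hL : 1 ≤ L)
    (hLip : ∀ x y : ℝ × ℝ, |K x - K y| ≤ L * max |x.1 - y.1| |x.2 - y.2|)
    (hP : (1/2:ℝ) ≤ ((P0 K γ).card : ℝ) * γ ^ 2)
    (ω : ℝ × ℝ) (d : ℤ × ℤ) (hd1 : |d.1| ≤ 1) (hd2 : |d.2| ≤ 1)
    (n : ℕ) (hn : (n:ℝ) * γ ≤ 1/(800*L)) :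
    (1/12800 : ℝ) * (1 - Real.cos ((n:ℝ) *
      (Real.pi * epsg γ * (ω.1 * (d.1:ℝ) + ω.2 * (d.2:ℝ))))) ≤ Phi K γ ω := by
  classical
  set θ := Real.pi * epsg γ * (ω.1 * (d.1:ℝ) + ω.2 * (d.2:ℝ)) with hθ
  set sh : ℤ × ℤ → ℤ × ℤ := fun k => (k.1 + (n:ℤ) * d.1, k.2 + (n:ℤ) * d.2) with hsh
  set P : Finset (ℤ × ℤ) := (P0 K γ).erase (-((n:ℤ) * d.1), -((n:ℤ) * d.2)) with hPdef
  set g : ℤ × ℤ → ℝ := fun k => wv K γ k * (1 - Real.cos (tv γ ω k)) with hg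
  have hgnn : ∀ k, 0 ≤ g k := fun k =>
    mul_nonneg (wv_nonneg hK01 k) (one_sub_cos_nonneg _)
  have hnγ : (n:ℝ) * γ ≤ 1 := le_trans hn (by rw [div_le_one (by linarith)]; linarith)
  have hnγ' : (n:ℝ) ≤ 1/γ := by rw [le_div_iff₀ hγ0]; linarith
  have hPsub : P ⊆ latt γ := (Finset.erase_subset _ _).trans (fun k hk => (mem_P0_iff.1 hk).1)
  -- facts about members of P
  have hPfacts : ∀ k ∈ P, sh k ∈ latt γ ∧ (1:ℝ)/800 ≤ K (γ * ((sh k).1 : ℝ), γ * ((sh k).2 : ℝ)) := by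
    intro k hk
    have hk0 : k ∈ P0 K γ := Finset.mem_of_mem_erase hk
    have hkne : k ≠ (-((n:ℤ) * d.1), -((n:ℤ) * d.2)) := Finset.ne_of_mem_erase hk
    have hkK : (1:ℝ)/400 ≤ K (γ * (k.1 : ℝ), γ * (k.2 : ℝ)) := (mem_P0_iff.1 hk0).2
    have hkabs : enorm2 (γ * (k.1 : ℝ), γ * (k.2 : ℝ)) < 3 := by
      by_contra hcon
      have := hsupp _ (le_of_not_gt hcon)
      rw [this] at hkK; norm_num at hkK
    have hb1 : |γ * (k.1:ℝ)| ≤ 3 := le_trans (abs_fst_le_enorm2 (γ * (k.1:ℝ), γ * (k.2:ℝ))) hkabs.le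
    have hb2 : |γ * (k.2:ℝ)| ≤ 3 := le_trans (abs_snd_le_enorm2 (γ * (k.1:ℝ), γ * (k.2:ℝ))) hkabs.le
    have hk1 : |(k.1:ℝ)| ≤ 3/γ := by
      rw [le_div_iff₀ hγ0]
      calc |(k.1:ℝ)| * γ = |γ * (k.1:ℝ)| := by rw [abs_mul, abs_of_pos hγ0]; ring
        _ ≤ 3 := hb1
    have hk2 : |(k.2:ℝ)| ≤ 3/γ := by
      rw [le_div_iff₀ hγ0]
      calc |(k.2:ℝ)| * γ = |γ * (k.2:ℝ)| := by rw [abs_mul, abs_of_pos hγ0]; ring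
        _ ≤ 3 := hb2
    have hd1' : |(d.1:ℝ)| ≤ 1 := by exact_mod_cast (show (|d.1| : ℤ) ≤ 1 from hd1)
    have hd2' : |(d.2:ℝ)| ≤ 1 := by exact_mod_cast (show (|d.2| : ℤ) ≤ 1 from hd2)
    have hsh1 : |((sh k).1 : ℝ)| ≤ 4/γ := by
      show |((k.1 + (n:ℤ) * d.1 : ℤ) : ℝ)| ≤ 4/γ
      push_cast
      calc |(k.1:ℝ) + (n:ℝ) * (d.1:ℝ)| ≤ |(k.1:ℝ)| + |(n:ℝ) * (d.1:ℝ)| := abs_add_le _ _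
        _ ≤ 3/γ + (n:ℝ) * 1 := by
            have : |(n:ℝ) * (d.1:ℝ)| = (n:ℝ) * |(d.1:ℝ)| := by
              rw [abs_mul, Nat.abs_cast]
            rw [this]
            have := mul_le_mul_of_nonneg_left hd1' (Nat.cast_nonneg n : (0:ℝ) ≤ n)
            linarith
        _ ≤ 3/γ + 1/γ := by linarith
        _ = 4/γ := by ring
    have hsh2 : |((sh k).2 : ℝ)| ≤ 4/γ := by
      show |((k.2 + (n:ℤ) * d.2 : ℤ) : ℝ)| ≤ 4/γ
      push_cast
      calc |(k.2:ℝ) + (n:ℝ) * (d.2:ℝ)| ≤ |(k.2:ℝ)| + |(n:ℝ) * (d.2:ℝ)| := abs_add_le _ _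
        _ ≤ 3/γ + (n:ℝ) * 1 := by
            have : |(n:ℝ) * (d.2:ℝ)| = (n:ℝ) * |(d.2:ℝ)| := by
              rw [abs_mul, Nat.abs_cast]
            rw [this]
            have := mul_le_mul_of_nonneg_left hd2' (Nat.cast_nonneg n : (0:ℝ) ≤ n)
            linarith
        _ ≤ 3/γ + 1/γ := by linarith
        _ = 4/γ := by ring
    have hmem : sh k ∈ latt γ := by
      rw [mem_latt_iff]
      refine ⟨?_, ?_, ?_⟩
      · intro hcon
        apply hkne
        rw [Prod.ext_iff] at hcon ⊢
        simp only [hsh] at hcon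
        obtain ⟨h1, h2⟩ := hcon
        constructor
        · simp at h1 ⊢; omega
        · simp at h2 ⊢; omega
      · have : |(((sh k).1 : ℤ) : ℝ)| ≤ ((NN γ : ℤ) : ℝ) := by
          push_cast
          exact le_trans (by exact_mod_cast hsh1) (by exact_mod_cast hγN)
        exact_mod_cast (by rwa [← Int.cast_abs] at this : ((|(sh k).1| : ℤ) : ℝ) ≤ ((NN γ : ℤ) : ℝ))
      · have : |(((sh k).2 : ℤ) : ℝ)| ≤ ((NN γ : ℤ) : ℝ) := by
          push_cast
          exact le_trans (by exact_mod_cast hsh2) (by exact_mod_cast hγN)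
        exact_mod_cast (by rwa [← Int.cast_abs] at this : ((|(sh k).2| : ℤ) : ℝ) ≤ ((NN γ : ℤ) : ℝ))
    refine ⟨hmem, ?_⟩
    -- Lipschitz step
    have hdist := hLip (γ * ((sh k).1 : ℝ), γ * ((sh k).2 : ℝ)) (γ * (k.1 : ℝ), γ * (k.2 : ℝ))
    have hc1 : |γ * ((sh k).1 : ℝ) - γ * (k.1 : ℝ)| ≤ (n:ℝ) * γ := by
      show |γ * ((k.1 + (n:ℤ) * d.1 : ℤ) : ℝ) - γ * (k.1 : ℝ)| ≤ (n:ℝ) * γ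
      push_cast
      rw [show γ * ((k.1:ℝ) + (n:ℝ) * (d.1:ℝ)) - γ * (k.1:ℝ) = γ * (n:ℝ) * (d.1:ℝ) by ring]
      rw [abs_mul]
      have h1 : |γ * (n:ℝ)| = γ * n := by
        rw [abs_of_nonneg (by positivity)]
      rw [h1]
      have hd1' : |(d.1:ℝ)| ≤ 1 := by exact_mod_cast (show (|d.1| : ℤ) ≤ 1 from hd1)
      calc γ * (n:ℝ) * |(d.1:ℝ)| ≤ γ * (n:ℝ) * 1 :=
            mul_le_mul_of_nonneg_left hd1' (mul_nonneg hγ0.le (Nat.cast_nonneg n))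
        _ = (n:ℝ) * γ := by ring
    have hc2 : |γ * ((sh k).2 : ℝ) - γ * (k.2 : ℝ)| ≤ (n:ℝ) * γ := by
      show |γ * ((k.2 + (n:ℤ) * d.2 : ℤ) : ℝ) - γ * (k.2 : ℝ)| ≤ (n:ℝ) * γ
      push_cast
      rw [show γ * ((k.2:ℝ) + (n:ℝ) * (d.2:ℝ)) - γ * (k.2:ℝ) = γ * (n:ℝ) * (d.2:ℝ) by ring]
      rw [abs_mul]
      have h1 : |γ * (n:ℝ)| = γ * n := by
        rw [abs_of_nonneg (by positivity)]
      rw [h1]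
      have hd2' : |(d.2:ℝ)| ≤ 1 := by exact_mod_cast (show (|d.2| : ℤ) ≤ 1 from hd2)
      calc γ * (n:ℝ) * |(d.2:ℝ)| ≤ γ * (n:ℝ) * 1 :=
            mul_le_mul_of_nonneg_left hd2' (mul_nonneg hγ0.le (Nat.cast_nonneg n))
        _ = (n:ℝ) * γ := by ring
    have hmax : max |γ * ((sh k).1 : ℝ) - γ * (k.1 : ℝ)| |γ * ((sh k).2 : ℝ) - γ * (k.2 : ℝ)| ≤ (n:ℝ) * γ :=
      max_le hc1 hc2
    have hLn : L * ((n:ℝ) * γ) ≤ 1/800 := by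
      have := mul_le_mul_of_nonneg_left hn (by linarith : (0:ℝ) ≤ L)
      calc L * ((n:ℝ) * γ) ≤ L * (1/(800*L)) := this
        _ = 1/800 := by field_simp
    have habs : |K (γ * ((sh k).1 : ℝ), γ * ((sh k).2 : ℝ)) - K (γ * (k.1 : ℝ), γ * (k.2 : ℝ))| ≤ 1/800 := by
      refine le_trans hdist (le_trans ?_ hLn)
      exact mul_le_mul_of_nonneg_left hmax (by linarith)
    have := abs_le.1 habs
    have h400 : (1:ℝ)/400 - 1/800 = 1/800 := by norm_num
    linarith
  -- per-element inequality
  have hper : ∀ k ∈ P, γ ^ 2 * (1/800) * (1 - Real.cos ((n:ℝ) * θ)) ≤ 2 * g k + 2 * g (sh k) := by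
    intro k hk
    obtain ⟨hmem, hKsh⟩ := hPfacts k hk
    have hk0 : k ∈ P0 K γ := Finset.mem_of_mem_erase hk
    have hkK : (1:ℝ)/400 ≤ K (γ * (k.1 : ℝ), γ * (k.2 : ℝ)) := (mem_P0_iff.1 hk0).2
    have harg : tv γ ω (sh k) - tv γ ω k = (n:ℝ) * θ := by
      rw [tv, tv, hθ, hsh]
      push_cast
      ring
    have hpair : 1 - Real.cos ((n:ℝ) * θ) ≤
        2 * (1 - Real.cos (tv γ ω k)) + 2 * (1 - Real.cos (tv γ ω (sh k))) := by
      rw [← harg]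
      exact cos_pair _ _
    have hw1 : γ ^ 2 * (1/800) ≤ wv K γ k := by
      rw [wv]; nlinarith [sq_nonneg γ]
    have hw2 : γ ^ 2 * (1/800) ≤ wv K γ (sh k) := by
      rw [wv]; nlinarith [sq_nonneg γ]
    have hgl1 : γ ^ 2 * (1/800) * (1 - Real.cos (tv γ ω k)) ≤ g k :=
      mul_le_mul_of_nonneg_right hw1 (one_sub_cos_nonneg _)
    have hgl2 : γ ^ 2 * (1/800) * (1 - Real.cos (tv γ ω (sh k))) ≤ g (sh k) :=
      mul_le_mul_of_nonneg_right hw2 (one_sub_cos_nonneg _)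
    nlinarith [sq_nonneg γ, one_sub_cos_nonneg ((n:ℝ) * θ)]
  -- summation
  have hshinj : Set.InjOn sh P := by
    intro a _ b _ hab
    rw [hsh, Prod.ext_iff] at hab
    obtain ⟨h1, h2⟩ := hab
    simp at h1 h2
    exact Prod.ext (by omega) (by omega)
  have hsum1 : ∑ k ∈ P, g k ≤ Phi K γ ω := by
    rw [Phi]
    exact Finset.sum_le_sum_of_subset_of_nonneg hPsub (fun k _ _ => hgnn k)
  have hsum2 : ∑ k ∈ P, g (sh k) ≤ Phi K γ ω := by
    rw [show ∑ k ∈ P, g (sh k) = ∑ k ∈ P.image sh, g k from (Finset.sum_image (fun a ha b hb h => hshinj ha hb h)).symm]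
    rw [Phi]
    apply Finset.sum_le_sum_of_subset_of_nonneg _ (fun k _ _ => hgnn k)
    intro k hk
    obtain ⟨a, ha, rfl⟩ := Finset.mem_image.1 hk
    exact (hPfacts a ha).1
  have hcount : (1/4 : ℝ) ≤ (P.card : ℝ) * γ ^ 2 := by
    have hP0card : 1 ≤ (P0 K γ).card := by
      by_contra hcon
      push_neg at hcon
      have h0 : (P0 K γ).card = 0 := by omega
      rw [h0] at hP; norm_num at hP
    have := Finset.pred_card_le_card_erase (s := P0 K γ) (a := (-((n:ℤ) * d.1), -((n:ℤ) * d.2)))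
    have hcast : ((P0 K γ).card : ℝ) - 1 ≤ (P.card : ℝ) := by
      rw [hPdef]
      exact_mod_cast (by omega : (P0 K γ).card - 1 ≤ ((P0 K γ).erase (-((n:ℤ) * d.1), -((n:ℤ) * d.2))).card)
    have h1 : ((P0 K γ).card - 1 : ℝ) * γ ^ 2 ≤ (P.card : ℝ) * γ ^ 2 :=
      mul_le_mul_of_nonneg_right hcast (sq_nonneg γ)
    have h2 : γ ^ 2 ≤ 1/4 := by nlinarith
    nlinarith
  have hbig : (P.card : ℝ) * (γ ^ 2 * (1/800) * (1 - Real.cos ((n:ℝ) * θ))) ≤ 4 * Phi K γ ω := by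
    calc (P.card : ℝ) * (γ ^ 2 * (1/800) * (1 - Real.cos ((n:ℝ) * θ)))
        = ∑ _k ∈ P, γ ^ 2 * (1/800) * (1 - Real.cos ((n:ℝ) * θ)) := by
          rw [Finset.sum_const, nsmul_eq_mul]
      _ ≤ ∑ k ∈ P, (2 * g k + 2 * g (sh k)) := Finset.sum_le_sum hper
      _ = 2 * (∑ k ∈ P, g k) + 2 * (∑ k ∈ P, g (sh k)) := by
          rw [Finset.sum_add_distrib, Finset.mul_sum, Finset.mul_sum]
      _ ≤ 4 * Phi K γ ω := by linarith
  have h1c : 0 ≤ 1 - Real.cos ((n:ℝ) * θ) := one_sub_cos_nonneg _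
  have hx : (0:ℝ) ≤ (1/800) * (1 - Real.cos ((n:ℝ) * θ)) := mul_nonneg (by norm_num) h1c
  calc (1/12800 : ℝ) * (1 - Real.cos ((n:ℝ) * θ))
      = ((1/4) * ((1/800) * (1 - Real.cos ((n:ℝ) * θ)))) / 4 := by ring
    _ ≤ (((P.card : ℝ) * γ ^ 2) * ((1/800) * (1 - Real.cos ((n:ℝ) * θ)))) / 4 := by
        gcongr
    _ = ((P.card : ℝ) * (γ ^ 2 * (1/800) * (1 - Real.cos ((n:ℝ) * θ)))) / 4 := by ring
    _ ≤ (4 * Phi K γ ω) / 4 := by gcongr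
    _ = Phi K γ ω := by ring

end fixedγ


noncomputable def Qc (γ : ℝ) (k : ℤ × ℤ) : Set (ℝ × ℝ) :=
  (Set.Ico (γ * (k.1:ℝ) - γ/2) (γ * (k.1:ℝ) + γ/2)) ×ˢ
  (Set.Ico (γ * (k.2:ℝ) - γ/2) (γ * (k.2:ℝ) + γ/2))

lemma Qc_meas (γ : ℝ) (k : ℤ × ℤ) : MeasurableSet (Qc γ k) :=
  measurableSet_Ico.prod measurableSet_Ico

lemma Qc_vol {γ : ℝ} (hγ : 0 < γ) (k : ℤ × ℤ) :
    volume (Qc γ k) = ENNReal.ofReal γ * ENNReal.ofReal γ := by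
  rw [Qc, Measure.volume_eq_prod, Measure.prod_prod, Real.volume_Ico, Real.volume_Ico]
  norm_num

lemma Qc_vol_lt_top {γ : ℝ} (hγ : 0 < γ) (k : ℤ × ℤ) : volume (Qc γ k) < ⊤ := by
  rw [Qc_vol hγ]
  exact ENNReal.mul_lt_top ENNReal.ofReal_lt_top ENNReal.ofReal_lt_top

lemma Qc_vol_toReal {γ : ℝ} (hγ : 0 < γ) (k : ℤ × ℤ) : (volume (Qc γ k)).toReal = γ ^ 2 := by
  rw [Qc_vol hγ, ENNReal.toReal_mul, ENNReal.toReal_ofReal hγ.le]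
  ring

lemma Qc_disjoint {γ : ℝ} (hγ : 0 < γ) {k l : ℤ × ℤ} (hkl : k ≠ l) :
    Disjoint (Qc γ k) (Qc γ l) := by
  rw [Set.disjoint_left]
  rintro x hx hy
  obtain ⟨hx1, hx2⟩ := hx
  obtain ⟨hy1, hy2⟩ := hy
  apply hkl
  have e1 : k.1 = l.1 := by
    by_contra hne
    have h1 : (1:ℝ) ≤ |(k.1:ℝ) - (l.1:ℝ)| := by
      have : 1 ≤ |k.1 - l.1| := Int.one_le_abs (sub_ne_zero.2 hne)
      calc (1:ℝ) ≤ ((|k.1 - l.1| : ℤ) : ℝ) := by exact_mod_cast this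
        _ = |(k.1:ℝ) - (l.1:ℝ)| := by push_cast [Int.cast_abs]; norm_num
    have h2 : |γ * (k.1:ℝ) - γ * (l.1:ℝ)| < γ := by
      rw [abs_sub_lt_iff]
      obtain ⟨ha, hb⟩ := hx1
      obtain ⟨hc, hd⟩ := hy1
      constructor <;> simp only [Set.mem_Ico] at * <;> linarith
    have h3 : |γ * (k.1:ℝ) - γ * (l.1:ℝ)| = γ * |(k.1:ℝ) - (l.1:ℝ)| := by
      rw [← mul_sub, abs_mul, abs_of_pos hγ]
    nlinarith
  have e2 : k.2 = l.2 := by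
    by_contra hne
    have h1 : (1:ℝ) ≤ |(k.2:ℝ) - (l.2:ℝ)| := by
      have : 1 ≤ |k.2 - l.2| := Int.one_le_abs (sub_ne_zero.2 hne)
      calc (1:ℝ) ≤ ((|k.2 - l.2| : ℤ) : ℝ) := by exact_mod_cast this
        _ = |(k.2:ℝ) - (l.2:ℝ)| := by push_cast [Int.cast_abs]; norm_num
    have h2 : |γ * (k.2:ℝ) - γ * (l.2:ℝ)| < γ := by
      rw [abs_sub_lt_iff]
      obtain ⟨ha, hb⟩ := hx2
      obtain ⟨hc, hd⟩ := hy2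
      constructor <;> simp only [Set.mem_Ico] at * <;> linarith
    have h3 : |γ * (k.2:ℝ) - γ * (l.2:ℝ)| = γ * |(k.2:ℝ) - (l.2:ℝ)| := by
      rw [← mul_sub, abs_mul, abs_of_pos hγ]
    nlinarith
  exact Prod.ext e1 e2

lemma Qc_mem_of {γ : ℝ} (hγ : 0 < γ) (x : ℝ × ℝ) :
    x ∈ Qc γ (⌊x.1/γ + 1/2⌋, ⌊x.2/γ + 1/2⌋) := by
  have h1a := Int.floor_le (x.1/γ + 1/2)
  have h1b := Int.lt_floor_add_one (x.1/γ + 1/2)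
  have h2a := Int.floor_le (x.2/γ + 1/2)
  have h2b := Int.lt_floor_add_one (x.2/γ + 1/2)
  have hx1 : x.1/γ * γ = x.1 := by field_simp
  have hx2 : x.2/γ * γ = x.2 := by field_simp
  constructor <;> constructor <;> simp only []
  · nlinarith [mul_le_mul_of_nonneg_right h1a hγ.le]
  · nlinarith [mul_le_mul_of_nonneg_right h1b.le hγ.le,
      (mul_lt_mul_of_pos_right h1b hγ : (x.1/γ + 1/2) * γ < ((⌊x.1/γ + 1/2⌋ : ℝ) + 1) * γ)]
  · nlinarith [mul_le_mul_of_nonneg_right h2a hγ.le]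
  · nlinarith [(mul_lt_mul_of_pos_right h2b hγ : (x.2/γ + 1/2) * γ < ((⌊x.2/γ + 1/2⌋ : ℝ) + 1) * γ)]


section integral
variable {K : ℝ × ℝ → ℝ} {γ L : ℝ}

lemma kernel_compactSupport
    (hsupp : ∀ x : ℝ × ℝ, 3 ≤ enorm2 x → K x = 0) : HasCompactSupport K := by
  apply HasCompactSupport.intro (isCompact_closedBall (0 : ℝ × ℝ) 3)
  intro x hx
  apply hsupp
  have : 3 < dist x 0 := by simpa [Metric.mem_closedBall] using hx
  rw [Prod.dist_eq] at this
  simp only [Real.dist_eq, Prod.fst_zero, Prod.snd_zero, sub_zero] at this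
  rcases lt_max_iff.1 this with h | h
  · exact le_trans h.le (abs_fst_le_enorm2 x)
  · exact le_trans h.le (abs_snd_le_enorm2 x)

set_option maxHeartbeats 1000000 in
lemma Sg_lower (hcont : Continuous K)
    (hK01 : ∀ x, K x ∈ Set.Icc (0:ℝ) 1)
    (hsupp : ∀ x : ℝ × ℝ, 3 ≤ enorm2 x → K x = 0)
    (hint : (∫ x : ℝ × ℝ, K x) = 1)
    (hL : 1 ≤ L)
    (hLip : ∀ x y : ℝ × ℝ, |K x - K y| ≤ L * max |x.1 - y.1| |x.2 - y.2|)
    (hγ0 : 0 < γ) (hγL : L * γ ≤ 1/1600) (hγN : 4/γ ≤ (NN γ : ℝ)) :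
    3/4 ≤ Sg K γ := by
  classical
  have hγ1 : γ ≤ 1/1600 := by nlinarith
  have hKint : Integrable K volume :=
    hcont.integrable_of_hasCompactSupport (kernel_compactSupport hsupp)
  set U : Set (ℝ × ℝ) := ⋃ k ∈ latt γ, Qc γ k with hU
  have hUmeas : MeasurableSet U :=
    (latt γ).measurableSet_biUnion (fun k _ => Qc_meas γ k)
  have hsplit : (∫ x in U, K x) + (∫ x in Uᶜ, K x) = 1 := by
    rw [integral_add_compl hUmeas hKint, hint]
  -- complement bound
  have hcompl : (∫ x in Uᶜ, K x) ≤ γ ^ 2 := by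
    have hind_int : Integrable ((Qc γ (0,0)).indicator (fun _ => (1:ℝ))) volume := by
      rw [integrable_indicator_iff (Qc_meas γ (0,0))]
      exact integrableOn_const (Qc_vol_lt_top hγ0 (0,0)).ne
    have hpt : ∀ x ∈ Uᶜ, K x ≤ (Qc γ (0,0)).indicator (fun _ => (1:ℝ)) x := by
      intro x hxU
      by_cases hx0 : x ∈ Qc γ (0,0)
      · rw [Set.indicator_of_mem hx0]
        exact (hK01 x).2
      · rw [Set.indicator_of_notMem hx0]
        by_cases hfar : 3 ≤ enorm2 x
        · rw [hsupp x hfar]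
        · exfalso
          apply hxU
          set k : ℤ × ℤ := (⌊x.1/γ + 1/2⌋, ⌊x.2/γ + 1/2⌋) with hk
          have hxk : x ∈ Qc γ k := Qc_mem_of hγ0 x
          have hkne : k ≠ (0,0) := by
            intro hcon
            rw [hcon] at hxk
            exact hx0 hxk
          have hxb1 : |x.1| ≤ 3 := le_trans (abs_fst_le_enorm2 x) (le_of_not_ge hfar)
          have hxb2 : |x.2| ≤ 3 := le_trans (abs_snd_le_enorm2 x) (le_of_not_ge hfar)
          have hbound : ∀ t : ℝ, |t| ≤ 3 → |(⌊t/γ + 1/2⌋ : ℝ)| ≤ 4/γ := by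
            intro t ht
            have hfl := Int.floor_le (t/γ + 1/2)
            have hfl2 := Int.lt_floor_add_one (t/γ + 1/2)
            have htγ : |t/γ| ≤ 3/γ := by
              rw [abs_div, abs_of_pos hγ0]
              gcongr
            have h32 : (3:ℝ)/2 ≤ 1/γ := by
              rw [le_div_iff₀ hγ0]; nlinarith
            have e3 : (3:ℝ)/γ = 3*(1/γ) := by ring
            have e4 : (4:ℝ)/γ = 4*(1/γ) := by ring
            rw [abs_le] at htγ ⊢
            constructor
            · linarith [hfl2, htγ.1]
            · linarith [hfl, htγ.2]
          have hmem : k ∈ latt γ := by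
            rw [mem_latt_iff]
            refine ⟨hkne, ?_, ?_⟩
            · exact_mod_cast (hbound x.1 hxb1).trans hγN
            · exact_mod_cast (hbound x.2 hxb2).trans hγN
          exact Set.mem_biUnion hmem hxk
    calc (∫ x in Uᶜ, K x) ≤ ∫ x in Uᶜ, (Qc γ (0,0)).indicator (fun _ => (1:ℝ)) x :=
          setIntegral_mono_on hKint.integrableOn hind_int.integrableOn
            hUmeas.compl hpt
      _ ≤ ∫ x, (Qc γ (0,0)).indicator (fun _ => (1:ℝ)) x :=
          setIntegral_le_integral hind_int
            (Filter.Eventually.of_forall (fun x => Set.indicator_nonneg (fun _ _ => zero_le_one) x))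
      _ = (volume (Qc γ (0,0))).toReal • (1:ℝ) := integral_indicator_const _ (Qc_meas γ (0,0))
      _ = γ ^ 2 := by rw [Qc_vol_toReal hγ0]; simp
  -- decompose U
  have hUint : (∫ x in U, K x) = ∑ k ∈ latt γ, ∫ x in Qc γ k, K x := by
    apply integral_biUnion_finset (latt γ) (fun k _ => Qc_meas γ k)
    · intro a _ b _ hab
      exact Qc_disjoint hγ0 hab
    · intro k _
      exact hKint.integrableOn
  -- per-cell bounds
  set p : ℤ × ℤ → Prop := fun k => |γ * (k.1:ℝ)| ≤ 7/2 ∧ |γ * (k.2:ℝ)| ≤ 7/2 with hp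
  have hfar : ∀ k ∈ (latt γ).filter (fun k => ¬ p k), (∫ x in Qc γ k, K x) = 0 := by
    intro k hk
    rw [Finset.mem_filter] at hk
    apply setIntegral_eq_zero_of_forall_eq_zero
    intro x hx
    apply hsupp
    obtain ⟨⟨ha1, ha2⟩, ⟨hb1, hb2⟩⟩ := hx
    rcases not_and_or.1 hk.2 with h | h
    · have h' : 7/2 < |γ * (k.1:ℝ)| := lt_of_not_ge h
      have : 3 ≤ |x.1| := by
        rw [lt_abs] at h'
        rw [le_abs]
        rcases h' with h' | h'
        · left; linarith
        · right; linarith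
      exact le_trans this (abs_fst_le_enorm2 x)
    · have h' : 7/2 < |γ * (k.2:ℝ)| := lt_of_not_ge h
      have : 3 ≤ |x.2| := by
        rw [lt_abs] at h'
        rw [le_abs]
        rcases h' with h' | h'
        · left; linarith
        · right; linarith
      exact le_trans this (abs_snd_le_enorm2 x)
  have hnear : ∀ k ∈ (latt γ).filter p, (∫ x in Qc γ k, K x) ≤ wv K γ k + L * γ ^ 3 := by
    intro k _
    have hpt : ∀ x ∈ Qc γ k, K x ≤ K (γ * (k.1:ℝ), γ * (k.2:ℝ)) + L * γ := by
      intro x hx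
      obtain ⟨⟨ha1, ha2⟩, ⟨hb1, hb2⟩⟩ := hx
      have h1 : |x.1 - γ * (k.1:ℝ)| ≤ γ := by
        rw [abs_le]; constructor <;> linarith
      have h2 : |x.2 - γ * (k.2:ℝ)| ≤ γ := by
        rw [abs_le]; constructor <;> linarith
      have := hLip x (γ * (k.1:ℝ), γ * (k.2:ℝ))
      have hmax : max |x.1 - γ * (k.1:ℝ)| |x.2 - γ * (k.2:ℝ)| ≤ γ := max_le h1 h2
      have habs : |K x - K (γ * (k.1:ℝ), γ * (k.2:ℝ))| ≤ L * γ := by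
        refine le_trans this ?_
        exact mul_le_mul_of_nonneg_left hmax (by linarith)
      linarith [(abs_le.1 habs).2]
    calc (∫ x in Qc γ k, K x) ≤ ∫ _x in Qc γ k, (K (γ * (k.1:ℝ), γ * (k.2:ℝ)) + L * γ) :=
          setIntegral_mono_on hKint.integrableOn
            (integrableOn_const (Qc_vol_lt_top hγ0 k).ne) (Qc_meas γ k) hpt
      _ = (volume (Qc γ k)).toReal • (K (γ * (k.1:ℝ), γ * (k.2:ℝ)) + L * γ) :=
          setIntegral_const _
      _ = wv K γ k + L * γ ^ 3 := by
          rw [Qc_vol_toReal hγ0, smul_eq_mul, wv]; ring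
  -- cardinal bound on near cells
  have hcard : (((latt γ).filter p).card : ℝ) * γ ^ 2 ≤ 64 := by
    have := card_scaled_le hγ0 (by norm_num : (0:ℝ) ≤ 7/2) ((latt γ).filter p)
      (fun k hk => (Finset.mem_filter.1 hk).2)
    calc (((latt γ).filter p).card : ℝ) * γ ^ 2 ≤ (2 * (7/2) + γ) ^ 2 := this
      _ ≤ 64 := by nlinarith
  -- combine
  have hsum : ∑ k ∈ latt γ, (∫ x in Qc γ k, K x) ≤ Sg K γ + 1/25 := by
    have hsplit2 := Finset.sum_filter_add_sum_filter_not (latt γ) p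
      (fun k => ∫ x in Qc γ k, K x)
    have hzero : ∑ k ∈ (latt γ).filter (fun k => ¬ p k), (∫ x in Qc γ k, K x) = 0 :=
      Finset.sum_eq_zero hfar
    have hnn : ∀ k ∈ latt γ, 0 ≤ wv K γ k := fun k _ => wv_nonneg hK01 k
    have h1 : ∑ k ∈ (latt γ).filter p, (∫ x in Qc γ k, K x)
        ≤ ∑ k ∈ (latt γ).filter p, (wv K γ k + L * γ ^ 3) := Finset.sum_le_sum hnear
    have h2 : ∑ k ∈ (latt γ).filter p, (wv K γ k + L * γ ^ 3)
        = (∑ k ∈ (latt γ).filter p, wv K γ k) + (((latt γ).filter p).card : ℝ) * (L * γ ^ 3) := by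
      rw [Finset.sum_add_distrib, Finset.sum_const, nsmul_eq_mul]
    have h3 : ∑ k ∈ (latt γ).filter p, wv K γ k ≤ Sg K γ := by
      rw [Sg]
      exact Finset.sum_le_sum_of_subset_of_nonneg (Finset.filter_subset _ _)
        (fun k hk _ => wv_nonneg hK01 k)
    have h4 : (((latt γ).filter p).card : ℝ) * (L * γ ^ 3) ≤ 1/25 := by
      have hLγ : 0 ≤ L * γ := by positivity
      calc (((latt γ).filter p).card : ℝ) * (L * γ ^ 3)
          = ((((latt γ).filter p).card : ℝ) * γ ^ 2) * (L * γ) := by ring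
        _ ≤ 64 * (L * γ) := by
            apply mul_le_mul_of_nonneg_right hcard hLγ
        _ ≤ 64 * (1/1600) := by nlinarith
        _ = 1/25 := by norm_num
    calc ∑ k ∈ latt γ, (∫ x in Qc γ k, K x) = _ + _ := hsplit2.symm
      _ ≤ Sg K γ + 1/25 := by rw [hzero]; linarith
  -- final
  have hγsq : γ ^ 2 ≤ 1/100 := by nlinarith
  have : (1:ℝ) ≤ Sg K γ + 1/25 + γ ^ 2 := by
    calc (1:ℝ) = (∫ x in U, K x) + (∫ x in Uᶜ, K x) := hsplit.symm
      _ ≤ (Sg K γ + 1/25) + γ ^ 2 := by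
          rw [hUint]
          exact add_le_add hsum hcompl
  linarith

end integral

section assembly
variable {K : ℝ × ℝ → ℝ} {γ L : ℝ} {ω : ℝ × ℝ}

lemma quad_cos {t : ℝ} (ht : |t| ≤ Real.pi) : 2 / Real.pi ^ 2 * t ^ 2 ≤ 1 - Real.cos t := by
  nlinarith [Real.cos_le_one_sub_mul_cos_sq ht]

lemma phi_nonneg (hK01 : ∀ x, K x ∈ Set.Icc (0:ℝ) 1) : 0 ≤ Phi K γ ω := by
  apply Finset.sum_nonneg
  intro k _
  exact mul_nonneg (wv_nonneg hK01 k) (one_sub_cos_nonneg _)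

lemma NN_lb (hγ0 : 0 < γ) (hγ : γ ≤ 1/5) : 4/γ ≤ (NN γ : ℝ) := by
  have h1 : γ⁻¹ ^ 2 < (NN γ : ℝ) + 1 := Nat.lt_floor_add_one _
  have hu : 5 ≤ γ⁻¹ := by
    rw [le_inv_comm₀ (by norm_num) hγ0]
    linarith
  have e4 : 4/γ = 4 * γ⁻¹ := by rw [div_eq_mul_inv]
  rw [e4]
  nlinarith [sq_nonneg (γ⁻¹ - 5)]

lemma NN_ub (hγ0 : 0 < γ) : (NN γ : ℝ) ≤ γ⁻¹ ^ 2 := Nat.floor_le (by positivity)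

lemma epsg_pos (γ : ℝ) : 0 < epsg γ := by
  rw [epsg]
  positivity

lemma epsg_N (γ : ℝ) : epsg γ * ((NN γ : ℝ) + 1/2) = 1 := by
  rw [epsg]
  have : (0:ℝ) < 2 * (NN γ : ℝ) + 1 := by positivity
  field_simp

lemma epsg_lb (hγ0 : 0 < γ) (hγ : γ ≤ 1/5) : (9/10) * γ ^ 2 ≤ epsg γ := by
  have hN := NN_ub (γ := γ) hγ0
  have hpos : (0:ℝ) < 2 * (NN γ : ℝ) + 1 := by positivity
  rw [epsg, le_div_iff₀ hpos]
  have hinv : γ⁻¹ ^ 2 * γ ^ 2 = 1 := by field_simp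
  have hγsq : γ ^ 2 ≤ 1/25 := by nlinarith
  nlinarith [Nat.cast_nonneg (α := ℝ) (NN γ)]

set_option maxHeartbeats 1000000 in
lemma branch_lemma
    (hK01 : ∀ x, K x ∈ Set.Icc (0:ℝ) 1)
    (hsupp : ∀ x : ℝ × ℝ, 3 ≤ enorm2 x → K x = 0)
    (hL : 1 ≤ L)
    (hLip : ∀ x y : ℝ × ℝ, |K x - K y| ≤ L * max |x.1 - y.1| |x.2 - y.2|)
    (hγ0 : 0 < γ) (hγL : γ * L < 1/1600)
    (hP : (1/2:ℝ) ≤ ((P0 K γ).card : ℝ) * γ ^ 2)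
    (ω : ℝ × ℝ) (d : ℤ × ℤ) (hd1 : |d.1| ≤ 1) (hd2 : |d.2| ≤ 1)
    (M : ℝ) (hM0 : 0 ≤ M)
    (hMabs : |ω.1 * (d.1:ℝ) + ω.2 * (d.2:ℝ)| = M)
    (hMN : M ≤ (NN γ : ℝ) + 1/2)
    (hv2M : γ ^ 2 * (ω.1 ^ 2 + ω.2 ^ 2) ≤ 2 * γ ^ 2 * M ^ 2) :
    (81/1280000) * (1/(1600 * L)) ^ 2 * min (γ ^ 2 * (ω.1 ^ 2 + ω.2 ^ 2)) 1 ≤ Phi K γ ω := by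
  have hπ := Real.pi_pos
  have hL0 : (0:ℝ) < L := by linarith
  have hγ5 : γ ≤ 1/5 := by nlinarith
  have hγN : 4/γ ≤ (NN γ : ℝ) := NN_lb hγ0 hγ5
  have hγhalf : γ ≤ 1/2 := by linarith
  have hε0 := epsg_pos γ
  have hεl := epsg_lb hγ0 hγ5
  have hεN := epsg_N γ
  set ε := epsg γ with hε
  set c : ℝ := 1/(1600 * L) with hc_def
  have hc0 : 0 < c := by positivity
  have hc1 : c ≤ 1 := by
    rw [hc_def, div_le_one (by positivity)]
    linarith
  set cst : ℝ := (81/1280000) * c ^ 2 with hcst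
  have hcst_pos : 0 < cst := by positivity
  have hcst_small : cst ≤ 1/12800 := by
    have hc2 : c ^ 2 ≤ 1 := by nlinarith
    rw [hcst]
    nlinarith
  set v2 : ℝ := γ ^ 2 * (ω.1 ^ 2 + ω.2 ^ 2) with hv2
  have hv2nn : 0 ≤ v2 := by positivity
  set m : ℝ := min v2 1 with hm
  have hm0 : 0 ≤ m := le_min hv2nn zero_le_one
  have hm1 : m ≤ 1 := min_le_right _ _
  have hmv : m ≤ v2 := min_le_left _ _
  rcases eq_or_lt_of_le hM0 with hMz | hMpos
  · -- M = 0
    have hz : v2 ≤ 0 := by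
      have : (2:ℝ) * γ ^ 2 * M ^ 2 = 0 := by rw [← hMz]; ring
      rw [hv2]; linarith [hv2M]
    have hv0 : v2 = 0 := le_antisymm hz hv2nn
    have hm00 : m = 0 := by rw [hm, hv0]; simp
    rw [hm00, mul_zero]
    exact phi_nonneg hK01
  -- M > 0
  set s : ℝ := Real.pi * ε * M with hs
  have hs0 : 0 < s := by positivity
  have hsπ : s ≤ Real.pi := by
    calc s = Real.pi * ε * M := hs
      _ ≤ Real.pi * ε * ((NN γ : ℝ) + 1/2) := by
          apply mul_le_mul_of_nonneg_left hMN (by positivity)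
      _ = Real.pi * (ε * ((NN γ : ℝ) + 1/2)) := by ring
      _ = Real.pi := by rw [hεN]; ring
  set n₀ : ℕ := ⌊1/(800*L*γ)⌋₊ with hn₀
  have h800 : (0:ℝ) < 800*L*γ := by positivity
  have hx2 : (2:ℝ) ≤ 1/(800*L*γ) := by
    rw [le_div_iff₀ h800]
    nlinarith
  have hn₀u : (n₀:ℝ) ≤ 1/(800*L*γ) := Nat.floor_le (by positivity)
  have hn₀l : c/γ ≤ (n₀:ℝ) := by
    have h2 : 1/(800*L*γ) < (n₀:ℝ) + 1 := by exact_mod_cast Nat.lt_floor_add_one (1/(800*L*γ))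
    have heq : c/γ = (1/(800*L*γ))/2 := by
      rw [hc_def, div_div, div_div]; congr 1; ring
    rw [heq]
    linarith
  have hn₀γ : (n₀:ℝ) * γ ≤ 1/(800*L) := by
    calc (n₀:ℝ) * γ ≤ (1/(800*L*γ)) * γ := mul_le_mul_of_nonneg_right hn₀u hγ0.le
      _ = 1/(800*L) := by field_simp
  have hθabs : ∀ n : ℕ, |(n:ℝ) * (Real.pi * ε * (ω.1 * (d.1:ℝ) + ω.2 * (d.2:ℝ)))| = (n:ℝ) * s := by
    intro n
    rw [abs_mul, abs_mul, Nat.abs_cast, hMabs, hs]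
    rw [abs_of_nonneg (by positivity : (0:ℝ) ≤ Real.pi * ε)]
  have hcosrw : ∀ n : ℕ, Real.cos ((n:ℝ) * (Real.pi * ε * (ω.1 * (d.1:ℝ) + ω.2 * (d.2:ℝ))))
      = Real.cos ((n:ℝ) * s) := by
    intro n
    rw [← Real.cos_abs, hθabs n]
  by_cases hcase : Real.pi / (2*s) ≤ (n₀:ℝ)
  · -- case A : flat regime
    set n : ℕ := ⌈Real.pi / (2*s)⌉₊ with hn
    have hnle : (n:ℝ) ≤ (n₀:ℝ) := by exact_mod_cast Nat.ceil_le.2 hcase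
    have hnγ : (n:ℝ) * γ ≤ 1/(800*L) :=
      le_trans (mul_le_mul_of_nonneg_right hnle hγ0.le) hn₀γ
    have hkey := pair_lemma hγ0 hγhalf hγN hK01 hsupp hL hLip hP ω d hd1 hd2 n hnγ
    have hnsl : Real.pi/2 ≤ (n:ℝ) * s := by
      have h1 : Real.pi / (2*s) ≤ (n:ℝ) := Nat.le_ceil _
      have h2 : (Real.pi / (2*s)) * s ≤ (n:ℝ) * s := mul_le_mul_of_nonneg_right h1 hs0.le
      calc Real.pi/2 = (Real.pi / (2*s)) * s := by field_simp
        _ ≤ (n:ℝ) * s := h2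
    have hnsu : (n:ℝ) * s ≤ Real.pi + Real.pi/2 := by
      have h1 : (n:ℝ) < Real.pi / (2*s) + 1 := Nat.ceil_lt_add_one (by positivity)
      have h2 : (n:ℝ) * s ≤ (Real.pi / (2*s) + 1) * s := by nlinarith
      calc (n:ℝ) * s ≤ (Real.pi / (2*s) + 1) * s := h2
        _ = Real.pi/2 + s := by field_simp
        _ ≤ Real.pi + Real.pi/2 := by linarith
    have hcos : Real.cos ((n:ℝ) * s) ≤ 0 :=
      Real.cos_nonpos_of_pi_div_two_le_of_le hnsl (by linarith)
    rw [hcosrw n] at hkey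
    calc cst * m ≤ cst * 1 := mul_le_mul_of_nonneg_left hm1 hcst_pos.le
      _ ≤ (1/12800) * 1 := by linarith
      _ ≤ (1/12800) * (1 - Real.cos ((n:ℝ) * s)) := by
          apply mul_le_mul_of_nonneg_left _ (by norm_num)
          linarith
      _ ≤ Phi K γ ω := hkey
  · -- case B : quadratic regime
    push_neg at hcase
    have hkey := pair_lemma hγ0 hγhalf hγN hK01 hsupp hL hLip hP ω d hd1 hd2 n₀ hn₀γ
    have hns : (n₀:ℝ) * s < Real.pi/2 := by
      have h2 : (n₀:ℝ) * s < (Real.pi / (2*s)) * s := mul_lt_mul_of_pos_right hcase hs0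
      calc (n₀:ℝ) * s < (Real.pi / (2*s)) * s := h2
        _ = Real.pi/2 := by field_simp
    have habs : |(n₀:ℝ) * s| ≤ Real.pi := by
      rw [abs_of_nonneg (by positivity)]
      linarith
    have hquad : 2 / Real.pi ^ 2 * ((n₀:ℝ) * s) ^ 2 ≤ 1 - Real.cos ((n₀:ℝ) * s) := quad_cos habs
    rw [hcosrw n₀] at hkey
    have hlow : (9/10) * Real.pi * γ * M * c ≤ (n₀:ℝ) * s := by
      have h1 : c/γ * (Real.pi * ((9/10) * γ^2) * M) ≤ c/γ * (Real.pi * ε * M) := by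
        apply mul_le_mul_of_nonneg_left _ (by positivity)
        apply mul_le_mul_of_nonneg_right _ hM0
        exact mul_le_mul_of_nonneg_left hεl (by positivity)
      have h2 : c/γ * (Real.pi * ε * M) ≤ (n₀:ℝ) * (Real.pi * ε * M) :=
        mul_le_mul_of_nonneg_right hn₀l (by positivity)
      have h3 : c/γ * (Real.pi * ((9/10) * γ^2) * M) = (9/10) * Real.pi * γ * M * c := by
        field_simp
      rw [← h3, hs]
      exact le_trans h1 h2
    have hlow0 : 0 ≤ (9/10) * Real.pi * γ * M * c := by positivity
    have hsq : ((9/10) * Real.pi * γ * M * c) ^ 2 ≤ ((n₀:ℝ) * s) ^ 2 :=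
      pow_le_pow_left₀ hlow0 hlow 2
    have hexp : (1/12800) * (2 / Real.pi ^ 2 * (((9/10) * Real.pi * γ * M * c) ^ 2))
        = (81/640000) * (γ * M) ^ 2 * c ^ 2 := by
      have hπ2 : Real.pi ≠ 0 := by positivity
      field_simp
      ring
    have hfin : cst * m ≤ (81/640000) * (γ * M) ^ 2 * c ^ 2 := by
      have h1 : m ≤ 2 * (γ * M) ^ 2 := by
        refine le_trans hmv ?_
        rw [hv2]
        calc γ ^ 2 * (ω.1 ^ 2 + ω.2 ^ 2) ≤ 2 * γ ^ 2 * M ^ 2 := hv2M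
          _ = 2 * (γ * M) ^ 2 := by ring
      calc cst * m ≤ cst * (2 * (γ * M) ^ 2) := mul_le_mul_of_nonneg_left h1 hcst_pos.le
        _ = (81/640000) * (γ * M) ^ 2 * c ^ 2 := by rw [hcst]; ring
    calc cst * m ≤ (81/640000) * (γ * M) ^ 2 * c ^ 2 := hfin
      _ = (1/12800) * (2 / Real.pi ^ 2 * (((9/10) * Real.pi * γ * M * c) ^ 2)) := hexp.symm
      _ ≤ (1/12800) * (2 / Real.pi ^ 2 * ((n₀:ℝ) * s) ^ 2) := by
          apply mul_le_mul_of_nonneg_left _ (by norm_num)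
          apply mul_le_mul_of_nonneg_left hsq (by positivity)
      _ ≤ (1/12800) * (1 - Real.cos ((n₀:ℝ) * s)) := by
          apply mul_le_mul_of_nonneg_left hquad (by norm_num)
      _ ≤ Phi K γ ω := hkey

end assembly

section final
variable {K : ℝ × ℝ → ℝ} {γ L : ℝ} {ω : ℝ × ℝ}

lemma enorm2_sq (x : ℝ × ℝ) : enorm2 x ^ 2 = x.1 ^ 2 + x.2 ^ 2 :=
  Real.sq_sqrt (by positivity)

lemma one_sub_Khat (hS : Sg K γ ≠ 0) : 1 - Khat K γ ω = (Sg K γ)⁻¹ * Phi K γ ω := by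
  have hsum : (∑ k ∈ latt γ, γ ^ 2 * K (γ * (k.1 : ℝ), γ * (k.2 : ℝ)) *
      Real.cos (Real.pi * epsg γ * (ω.1 * (k.1 : ℝ) + ω.2 * (k.2 : ℝ))))
      = Sg K γ - Phi K γ ω := by
    rw [Sg, Phi, ← Finset.sum_sub_distrib]
    apply Finset.sum_congr rfl
    intro k _
    rw [wv, tv]
    ring
  have hcg : cgam K γ = (Sg K γ)⁻¹ := rfl
  rw [Khat, hcg, hsum]
  field_simp
  ring

lemma kernel_lipschitz (hC2 : ContDiff ℝ 2 K)
    (hsupp : ∀ x : ℝ × ℝ, 3 ≤ enorm2 x → K x = 0) :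
    ∃ L : ℝ, 1 ≤ L ∧ ∀ x y : ℝ × ℝ, |K x - K y| ≤ L * max |x.1 - y.1| |x.2 - y.2| := by
  have hdiff : Differentiable ℝ K := (hC2.differentiable (by norm_num))
  have hcont : Continuous (fun x => ‖fderiv ℝ K x‖) :=
    ((hC2.fderiv_right (m := 1) (by norm_num)).continuous).norm
  obtain ⟨z, _, hz⟩ := (isCompact_closedBall (0 : ℝ × ℝ) 4).exists_isMaxOn
    (Metric.nonempty_closedBall.2 (by norm_num)) hcont.continuousOn
  set M := max ‖fderiv ℝ K z‖ 1 with hM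
  have hM1 : 1 ≤ M := le_max_right _ _
  have hbound : ∀ x : ℝ × ℝ, ‖fderiv ℝ K x‖ ≤ M := by
    intro x
    by_cases hx : x ∈ Metric.closedBall (0 : ℝ × ℝ) 4
    · exact le_max_of_le_left (hz hx)
    · have hx' : 4 < dist x 0 := by simpa [Metric.mem_closedBall] using hx
      have : fderiv ℝ K x = 0 := by
        have hev : K =ᶠ[nhds x] (fun _ => (0 : ℝ)) := by
          have : Metric.ball x 1 ∈ nhds x := Metric.ball_mem_nhds x one_pos
          refine Filter.eventuallyEq_of_mem this (fun y hy => ?_)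
          apply hsupp
          have h1 : dist x y < 1 := by simpa [Metric.mem_ball, dist_comm] using hy
          have h2 : 4 - 1 ≤ dist y 0 := by
            have := dist_triangle x y 0
            linarith [dist_comm x y ▸ h1]
          have h3 : dist y 0 ≤ max |y.1| |y.2| := by
            rw [Prod.dist_eq]
            simp [Real.dist_eq]
          rcases le_max_iff.1 (h2.trans h3) with h | h
          · exact le_trans (by linarith) (abs_fst_le_enorm2 y)
          · exact le_trans (by linarith) (abs_snd_le_enorm2 y)
        calc fderiv ℝ K x = fderiv ℝ (fun _ => (0:ℝ)) x := Filter.EventuallyEq.fderiv_eq hev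
          _ = 0 := fderiv_const_apply 0
      rw [this]
      simp
      linarith
  have hlip : LipschitzWith (Real.toNNReal M) K := by
    apply lipschitzWith_of_nnnorm_fderiv_le hdiff
    intro x
    rw [← NNReal.coe_le_coe]
    simpa [Real.coe_toNNReal _ (by linarith : (0:ℝ) ≤ M)] using hbound x
  refine ⟨M, hM1, fun x y => ?_⟩
  have := hlip.dist_le_mul x y
  rw [Real.dist_eq] at this
  refine le_trans this ?_
  rw [Real.coe_toNNReal _ (by linarith : (0:ℝ) ≤ M), Prod.dist_eq]
  simp [Real.dist_eq]

set_option maxHeartbeats 1600000 in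
theorem stmt10' (K : ℝ × ℝ → ℝ) (hK : IsKernel K) :
    ∃ C₁ : ℝ, 0 < C₁ ∧ ∃ γ₀ : ℝ, 0 < γ₀ ∧ γ₀ < 1 / 3 ∧
      ∀ γ : ℝ, 0 < γ → γ < γ₀ → ∀ ω : ℝ × ℝ,
        |ω.1| ≤ (NN γ : ℝ) + 1 / 2 → |ω.2| ≤ (NN γ : ℝ) + 1 / 2 →
        min ((γ * enorm2 ω) ^ 2) 1 / C₁ ≤ 1 - Khat K γ ω := by
  obtain ⟨hC2, hK01, hrot, hsupp, hint, hmom⟩ := hK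
  obtain ⟨L, hL, hLip⟩ := kernel_lipschitz hC2 hsupp
  have hL0 : (0:ℝ) < L := by linarith
  refine ⟨49 * (1280000 * (1600 * L) ^ 2) / 81, by positivity, 1/(1600 * L), by positivity, ?_, ?_⟩
  · calc 1/(1600 * L) ≤ 1/1600 := by
          apply div_le_div_of_nonneg_left (by norm_num) (by norm_num)
          nlinarith
      _ < 1/3 := by norm_num
  intro γ hγ0 hγγ0 ω hω1 hω2
  set C₁ : ℝ := 49 * (1280000 * (1600 * L) ^ 2) / 81 with hC₁
  have hγL : γ * L < 1/1600 := by
    have := mul_lt_mul_of_pos_right hγγ0 hL0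
    calc γ * L < 1/(1600 * L) * L := this
      _ = 1/1600 := by field_simp
  have hγ5 : γ ≤ 1/5 := by nlinarith
  have hγ1 : γ ≤ 1 := by linarith
  have hγN : 4/γ ≤ (NN γ : ℝ) := NN_lb hγ0 hγ5
  have hS34 : 3/4 ≤ Sg K γ := Sg_lower hC2.continuous hK01 hsupp hint hL hLip hγ0
    (by nlinarith) hγN
  have hS49 : Sg K γ ≤ 49 := Sg_le_49 hγ0 hγ1 hK01 hsupp
  have hSpos : 0 < Sg K γ := by linarith
  have hP := card_P0 hγ0 hγ1 hK01 hsupp hS34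
  have hven : (γ * enorm2 ω) ^ 2 = γ ^ 2 * (ω.1 ^ 2 + ω.2 ^ 2) := by
    rw [mul_pow, enorm2_sq]
  have hΦnn : 0 ≤ Phi K γ ω := phi_nonneg hK01
  -- branch lemma with appropriate direction
  have hbr : (81/1280000) * (1/(1600 * L)) ^ 2 * min (γ ^ 2 * (ω.1 ^ 2 + ω.2 ^ 2)) 1
      ≤ Phi K γ ω := by
    rcases le_total |ω.2| |ω.1| with hMM | hMM
    · apply branch_lemma hK01 hsupp hL hLip hγ0 hγL hP ω ((1:ℤ), (0:ℤ))
        (by norm_num) (by norm_num) |ω.1| (abs_nonneg _) (by norm_num) hω1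
      have h1 : ω.2 ^ 2 ≤ ω.1 ^ 2 := by
        have := pow_le_pow_left₀ (abs_nonneg ω.2) hMM 2
        rwa [sq_abs, sq_abs] at this
      have h2 : |ω.1| ^ 2 = ω.1 ^ 2 := sq_abs _
      nlinarith [sq_nonneg γ]
    · apply branch_lemma hK01 hsupp hL hLip hγ0 hγL hP ω ((0:ℤ), (1:ℤ))
        (by norm_num) (by norm_num) |ω.2| (abs_nonneg _) (by norm_num) hω2
      have h1 : ω.1 ^ 2 ≤ ω.2 ^ 2 := by
        have := pow_le_pow_left₀ (abs_nonneg ω.1) hMM 2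
        rwa [sq_abs, sq_abs] at this
      have h2 : |ω.2| ^ 2 = ω.2 ^ 2 := sq_abs _
      nlinarith [sq_nonneg γ]
  -- conclude
  rw [one_sub_Khat (ne_of_gt hSpos), hven]
  have hC1eq : min (γ ^ 2 * (ω.1 ^ 2 + ω.2 ^ 2)) 1 / C₁
      = ((81/1280000) * (1/(1600 * L)) ^ 2 * min (γ ^ 2 * (ω.1 ^ 2 + ω.2 ^ 2)) 1) / 49 := by
    rw [hC₁]
    field_simp
  rw [hC1eq]
  calc ((81/1280000) * (1/(1600 * L)) ^ 2 * min (γ ^ 2 * (ω.1 ^ 2 + ω.2 ^ 2)) 1) / 49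
      ≤ Phi K γ ω / 49 := by
        apply div_le_div_of_nonneg_right hbr -- may need name fix
        norm_num
    _ ≤ Phi K γ ω / Sg K γ := by
        gcongr
    _ = (Sg K γ)⁻¹ * Phi K γ ω := by rw [div_eq_inv_mul]

end final

/-- There exist `C₁ > 0` and `γ₀ ∈ (0, 1/3)` such that for all `0 < γ < γ₀` and all
`ω ∈ [-N-1/2, N+1/2]²`: `1 - K̂_γ(ω) ≥ min |γω|² 1 / C₁`. -/
theorem stmt10 (K : ℝ × ℝ → ℝ) (hK : IsKernel K) :
    ∃ C₁ : ℝ, 0 < C₁ ∧ ∃ γ₀ : ℝ, 0 < γ₀ ∧ γ₀ < 1 / 3 ∧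
      ∀ γ : ℝ, 0 < γ → γ < γ₀ → ∀ ω : ℝ × ℝ,
        |ω.1| ≤ (NN γ : ℝ) + 1 / 2 → |ω.2| ≤ (NN γ : ℝ) + 1 / 2 →
        min ((γ * enorm2 ω) ^ 2) 1 / C₁ ≤ 1 - Khat K γ ω :=
  stmt10' K hK
end
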